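/- arXiv:1308.4884 — 3 statements merged into one kernel-verified Lean document; each statement's English description precedes it below -/
import Mathlib

section
/- For every u ∈ [0,1], the map y ↦ F(u,y) is a bijection from [0, 1/u) onto [0, F(u,1/u)) (with 1/0 := ∞ and F(0,∞) := ∞); its inverse z ↦ F⁻¹(u,z) is continuously differentiable on [0, F(u,1/u)), with ∂_z F⁻¹(u,z) = [F⁻¹(u,z)(1 - u·F⁻¹(u,z))]^β for z > 0 and ∂_z F⁻¹(u,z) → 0 as z → 0⁺. -/
/- Fix β ∈ (0,1). F(u,y) = ∫₀^y [v(1-uv)]^{-β} dv, defined on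
D = {(u,y) ∈ [0,1] × [0,∞) : uy < 1}.
STATEMENT 2: For every u ∈ [0,1], the map y ↦ F(u,y) is a bijection from
[0, 1/u) onto [0, F(u,1/u)) (with 1/0 := ∞ and F(0,∞) := ∞, so the target is
[0,∞) when u = 0); its inverse z ↦ F⁻¹(u,z) is continuously differentiable on
[0, F(u,1/u)), with ∂_z F⁻¹(u,z) = [F⁻¹(u,z)(1 - u·F⁻¹(u,z))]^β for z > 0 and
∂_z F⁻¹(u,z) → 0 as z → 0⁺. -/

noncomputable def F (β u y : ℝ) : ℝ := ∫ v in (0:ℝ)..y, (v * (1 - u * v)) ^ (-β)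

/-- The domain [0,1/u) of F(u,·), with 1/0 := ∞. -/
def Dy (u : ℝ) : Set ℝ := {y : ℝ | 0 ≤ y ∧ u * y < 1}

/-- The range [0, F(u,1/u)) of F(u,·), with F(0,∞) := ∞. -/
noncomputable def Zset (β u : ℝ) : Set ℝ :=
  if u = 0 then Set.Ici 0 else Set.Ico 0 (F β u (1 / u))

open Set MeasureTheory Filter Topology intervalIntegral Real in
theorem stmt2 (β : ℝ) (hβ : β ∈ Set.Ioo (0:ℝ) 1) (u : ℝ) (hu : u ∈ Set.Icc (0:ℝ) 1) :
    ∃ Finv : ℝ → ℝ,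
      Set.BijOn (F β u) (Dy u) (Zset β u) ∧
      Set.InvOn Finv (F β u) (Dy u) (Zset β u) ∧
      ContDiffOn ℝ 1 Finv (Zset β u) ∧
      (∀ z ∈ Zset β u, 0 < z →
        HasDerivAt Finv ((Finv z * (1 - u * Finv z)) ^ β) z) ∧
      Filter.Tendsto (deriv Finv) (nhdsWithin 0 (Set.Ioi 0)) (nhds 0) := by
  obtain ⟨hβ0, hβ1⟩ := hβ
  obtain ⟨hu0, hu1⟩ := hu
  set f : ℝ → ℝ := fun v => (v * (1 - u * v)) ^ (-β) with hf_def
  have hFdef : ∀ y : ℝ, F β u y = ∫ v in (0:ℝ)..y, f v := fun _ => rfl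
  -- continuity of the integrand at good points
  have hfc : ∀ v : ℝ, 0 < v → u * v < 1 → ContinuousAt f v := by
    intro v hv huv
    have hb : 0 < v * (1 - u * v) := mul_pos hv (by linarith)
    have hin : ContinuousAt (fun v : ℝ => v * (1 - u * v)) v :=
      (continuous_id.mul (continuous_const.sub (continuous_const.mul continuous_id))).continuousAt
    exact hin.rpow_const (Or.inl hb.ne')
  have hfnn : ∀ v : ℝ, 0 ≤ v → u * v ≤ 1 → 0 ≤ f v := fun v h1 h2 =>
    Real.rpow_nonneg (mul_nonneg h1 (by linarith)) _
  have hfpos : ∀ v : ℝ, 0 < v → u * v < 1 → 0 < f v := fun v h1 h2 =>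
    Real.rpow_pos_of_pos (mul_pos h1 (by linarith)) _
  -- integrability
  have hint : ∀ y : ℝ, 0 ≤ y → u * y ≤ 1 → IntervalIntegrable f volume 0 y := by
    intro y hy huy
    rcases eq_or_lt_of_le hy with rfl | hy'
    · exact IntervalIntegrable.refl
    rcases eq_or_lt_of_le hu0 with h0 | h0
    · -- u = 0
      have hfe : f = fun v => v ^ (-β) := by
        funext v; rw [hf_def]; simp [← h0]
      rw [hfe]; exact intervalIntegrable_rpow' (by linarith)
    · -- u > 0
      have i1 : IntervalIntegrable (fun v : ℝ => v ^ (-β)) volume 0 y :=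
        intervalIntegrable_rpow' (by linarith)
      have i2 : IntervalIntegrable (fun v : ℝ => (1 - u * v) ^ (-β)) volume 0 y := by
        have base : ∀ a b : ℝ, IntervalIntegrable (fun v : ℝ => (1 - v) ^ (-β)) volume a b := by
          intro a b
          have h := (intervalIntegrable_rpow' (a := 1 - a) (b := 1 - b) (r := -β)
            (by linarith)).comp_sub_left 1
          simpa using h
        have h := (base (u * 0) (u * y)).comp_mul_left (c := u)
        rw [mul_comm u 0, mul_comm u y, mul_div_assoc, mul_div_assoc,
          div_self h0.ne', mul_one, mul_one] at h
        exact h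
      have hg_int : IntervalIntegrable
          (fun v : ℝ => (2:ℝ) ^ β * v ^ (-β) + (2*u) ^ β * (1 - u * v) ^ (-β)) volume 0 y :=
        (i1.const_mul _).add (i2.const_mul _)
      refine hg_int.mono_fun' ?_ ?_
      · -- a.e. strong measurability of f on (0, y]
        have hconOn : ContinuousOn f (Ioo 0 y) := by
          intro v hv
          refine (hfc v hv.1 ?_).continuousWithinAt
          exact lt_of_lt_of_le (by nlinarith [hv.2] : u * v < u * y) huy
        have hae : AEStronglyMeasurable f (volume.restrict (Ioo 0 y)) :=
          hconOn.aestronglyMeasurable measurableSet_Ioo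
        rw [uIoc_of_le hy, ← Measure.restrict_congr_set Ioo_ae_eq_Ioc]
        exact hae
      · rw [uIoc_of_le hy]
        refine (ae_restrict_iff' measurableSet_Ioc).2 (Filter.Eventually.of_forall ?_)
        rintro x ⟨hx0, hxy⟩
        have hux : u * x ≤ 1 := le_trans (mul_le_mul_of_nonneg_left hxy hu0) huy
        have hbase : (0:ℝ) ≤ x * (1 - u * x) := mul_nonneg hx0.le (by linarith)
        have hterm1 : (0:ℝ) ≤ (2:ℝ) ^ β * x ^ (-β) :=
          mul_nonneg (Real.rpow_nonneg (by norm_num) _) (Real.rpow_nonneg hx0.le _)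
        have hterm2 : (0:ℝ) ≤ (2*u) ^ β * (1 - u * x) ^ (-β) :=
          mul_nonneg (Real.rpow_nonneg (by positivity) _) (Real.rpow_nonneg (by linarith) _)
        have hnorm : ‖f x‖ = f x := Real.norm_of_nonneg (hfnn x hx0.le hux)
        show ‖f x‖ ≤ _
        rw [hnorm]
        rcases le_or_gt x (1/(2*u)) with hcase | hcase
        · have h2 : u * x ≤ 1/2 := by
            have := mul_le_mul_of_nonneg_left hcase hu0
            calc u * x ≤ u * (1/(2*u)) := this
              _ = 1/2 := by field_simp
          have hb2 : x/2 ≤ x * (1 - u * x) := by nlinarith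
          have hle1 : f x ≤ (x/2) ^ (-β) := by
            rw [hf_def]
            exact Real.rpow_le_rpow_of_nonpos (by positivity) hb2 (by linarith)
          have hx2 : (x/2 : ℝ) ^ (-β) = 2 ^ β * x ^ (-β) := by
            rw [div_eq_mul_inv, Real.mul_rpow hx0.le (by norm_num),
              Real.inv_rpow (by norm_num), ← Real.rpow_neg (by norm_num), neg_neg, mul_comm]
          calc f x ≤ (x/2) ^ (-β) := hle1
            _ = 2 ^ β * x ^ (-β) := hx2
            _ ≤ _ := le_add_of_nonneg_right hterm2
        · rcases eq_or_lt_of_le hux with heq | hlt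
          · have hz : x * (1 - u * x) = 0 := by rw [← heq]; ring
            have hfx : f x = 0 := by
              show (x * (1 - u * x)) ^ (-β) = 0
              rw [hz]
              exact Real.zero_rpow (neg_ne_zero.2 hβ0.ne')
            rw [hfx]
            exact add_nonneg hterm1 hterm2
          · have h1ux : 0 < 1 - u * x := by linarith
            have hb2 : (1 - u * x)/(2*u) ≤ x * (1 - u * x) := by
              calc (1 - u * x)/(2*u) = (1/(2*u)) * (1 - u * x) := by ring
                _ ≤ x * (1 - u * x) := mul_le_mul_of_nonneg_right hcase.le h1ux.le
            have hle1 : f x ≤ ((1 - u * x)/(2*u)) ^ (-β) := by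
              rw [hf_def]
              exact Real.rpow_le_rpow_of_nonpos (by positivity) hb2 (by linarith)
            have hx2 : ((1 - u * x)/(2*u) : ℝ) ^ (-β) = (2*u) ^ β * (1 - u * x) ^ (-β) := by
              rw [div_eq_mul_inv, Real.mul_rpow h1ux.le (by positivity),
                Real.inv_rpow (by positivity), ← Real.rpow_neg (by positivity), neg_neg, mul_comm]
            calc f x ≤ ((1 - u * x)/(2*u)) ^ (-β) := hle1
              _ = (2*u) ^ β * (1 - u * x) ^ (-β) := hx2
              _ ≤ _ := le_add_of_nonneg_left hterm1
  have hint2 : ∀ a b : ℝ, 0 ≤ a → a ≤ b → u * b ≤ 1 → IntervalIntegrable f volume a b := by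
    intro a b ha hab hub
    refine (hint b (ha.trans hab) hub).mono_set' ?_
    rw [uIoc_of_le hab, uIoc_of_le (ha.trans hab)]
    exact Ioc_subset_Ioc ha le_rfl
  have hadd : ∀ a b : ℝ, 0 ≤ a → a ≤ b → u * b ≤ 1 →
      F β u b = F β u a + ∫ v in a..b, f v := by
    intro a b ha hab hub
    have h1 : IntervalIntegrable f volume 0 a :=
      hint a ha (le_trans (mul_le_mul_of_nonneg_left hab hu0) hub)
    have h2 : IntervalIntegrable f volume a b := hint2 a b ha hab hub
    rw [hFdef, hFdef]
    exact (integral_add_adjacent_intervals h1 h2).symm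
  have hF0 : F β u 0 = 0 := by rw [hFdef]; exact intervalIntegral.integral_same
  have hmono : ∀ a b : ℝ, 0 ≤ a → a < b → u * b ≤ 1 → F β u a < F β u b := by
    intro a b ha hab hub
    rw [hadd a b ha hab.le hub]
    have hpos : 0 < ∫ v in a..b, f v := by
      refine intervalIntegral.intervalIntegral_pos_of_pos_on (hint2 a b ha hab.le hub) ?_ hab
      intro x hx
      refine hfpos x (lt_of_le_of_lt ha hx.1) ?_
      rcases eq_or_lt_of_le hu0 with h0 | h0
      · simp [← h0]
      · exact lt_of_lt_of_le (by nlinarith [hx.2] : u * x < u * b) hub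
    linarith
  have hmonoOn : ∀ a b : ℝ, 0 ≤ a → a ≤ b → u * b ≤ 1 → F β u a ≤ F β u b := by
    intro a b ha hab hub
    rcases eq_or_lt_of_le hab with rfl | h
    · exact le_rfl
    · exact (hmono a b ha h hub).le
  -- derivative of F
  have hderivF : ∀ y : ℝ, 0 < y → u * y < 1 → HasDerivAt (F β u) (f y) y := by
    intro y hy huy
    set B : ℝ := if u = 0 then y + 1 else 1/u with hB
    have hvB : ∀ v : ℝ, 0 < v → v < B → u * v < 1 := by
      intro v hv hvB
      rcases eq_or_lt_of_le hu0 with h0 | h0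
      · simp [← h0]
      · rw [hB, if_neg h0.ne'] at hvB
        calc u * v < u * (1/u) := by nlinarith
          _ = 1 := by field_simp
    have hyB : y < B := by
      rcases eq_or_lt_of_le hu0 with h0 | h0
      · rw [hB, if_pos h0.symm]; linarith
      · rw [hB, if_neg h0.ne']
        rw [lt_div_iff₀ h0, mul_comm]
        exact huy
    have hcont : ContinuousAt f y := hfc y hy huy
    have hintY : IntervalIntegrable f volume 0 y := hint y hy.le huy.le
    have hmeasAt : StronglyMeasurableAtFilter f (𝓝 y) := by
      refine ⟨Ioo 0 B, isOpen_Ioo.mem_nhds ⟨hy, hyB⟩, ?_⟩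
      refine ContinuousOn.aestronglyMeasurable ?_ measurableSet_Ioo
      intro v hv
      exact (hfc v hv.1 (hvB v hv.1 hv.2)).continuousWithinAt
    have h := intervalIntegral.integral_hasDerivAt_right hintY hmeasAt hcont
    exact h
  -- structural facts about Dy and Zset
  obtain ⟨hbij, h0Z, hZsub, hZopen, hZGE, hZIoi, hUD⟩ :
      Set.BijOn (F β u) (Dy u) (Zset β u) ∧ (0:ℝ) ∈ Zset β u ∧ Zset β u ⊆ Ici 0 ∧
      IsOpen (Zset β u ∩ Ioi 0) ∧ Zset β u ∈ 𝓝[≥] (0:ℝ) ∧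
      (Zset β u ∩ Ioi 0) ∈ 𝓝[>] (0:ℝ) ∧ UniqueDiffOn ℝ (Zset β u) := by
    rcases eq_or_lt_of_le hu0 with h0 | h0
    · -- u = 0
      subst h0
      have hZ : Zset β 0 = Ici 0 := if_pos rfl
      have hD : Dy 0 = Ici 0 := by
        ext w; simp [Dy]
      have hFexp : ∀ w : ℝ, F β 0 w = w ^ (1-β) / (1-β) := by
        intro w
        have hfe : ∀ v : ℝ, f v = v ^ (-β) := by
          intro v; rw [hf_def]; simp
        rw [hFdef]
        rw [intervalIntegral.integral_congr (g := fun v : ℝ => v ^ (-β))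
          (fun v _ => hfe v)]
        rw [integral_rpow (Or.inl (by linarith))]
        rw [Real.zero_rpow (by linarith : -β + 1 ≠ 0)]
        rw [show -β + 1 = 1 - β by ring]
        ring
      have hZI : Zset β 0 ∩ Ioi 0 = Ioi 0 := by
        rw [hZ]; ext w
        exact ⟨fun h => h.2, fun h => ⟨mem_Ici.2 (le_of_lt (mem_Ioi.1 h)), h⟩⟩
      refine ⟨?_, ?_, ?_, ?_, ?_, ?_, ?_⟩
      · rw [hZ, hD]
        refine ⟨?_, ?_, ?_⟩
        · intro w hw
          have := hmonoOn 0 w le_rfl hw (by norm_num)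
          rw [hF0] at this
          exact this
        · intro a ha b hb hab
          by_contra hne
          rcases lt_or_gt_of_ne hne with h | h
          · exact absurd hab (hmono a b ha h (by norm_num)).ne
          · exact absurd hab.symm (hmono b a hb h (by norm_num)).ne
        · intro z hz
          set w : ℝ := ((1-β) * z) ^ ((1-β)⁻¹) with hw
          have hwnn : 0 ≤ w := Real.rpow_nonneg (by nlinarith [mem_Ici.1 hz]) _
          refine ⟨w, hwnn, ?_⟩
          rw [hFexp w, hw, ← Real.rpow_mul (by nlinarith [mem_Ici.1 hz]),
            inv_mul_cancel₀ (by linarith : (1:ℝ) - β ≠ 0), Real.rpow_one,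
            mul_div_assoc, mul_comm]
          exact div_mul_cancel₀ z (by linarith : (1:ℝ) - β ≠ 0)
      · rw [hZ]; exact self_mem_Ici
      · rw [hZ]
      · rw [hZI]; exact isOpen_Ioi
      · rw [hZ]; exact self_mem_nhdsWithin
      · rw [hZI]; exact self_mem_nhdsWithin
      · rw [hZ]; exact uniqueDiffOn_Ici 0
    · -- u > 0
      set c : ℝ := 1/u with hc_def
      have hc : 0 < c := by positivity
      have hucle : u * c ≤ 1 := by rw [hc_def]; rw [mul_one_div, div_self h0.ne']
      have hZ : Zset β u = Ico 0 (F β u c) := if_neg h0.ne'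
      have hD : Dy u = Ico 0 c := by
        ext w
        constructor
        · rintro ⟨h1, h2⟩
          exact ⟨h1, by rw [hc_def, lt_div_iff₀ h0, mul_comm]; exact h2⟩
        · rintro ⟨h1, h2⟩
          refine ⟨h1, ?_⟩
          rw [hc_def, lt_div_iff₀ h0, mul_comm] at h2
          exact h2
      have hFc : 0 < F β u c := by
        have := hmono 0 c le_rfl hc hucle
        rwa [hF0] at this
      have hubIco : ∀ w ∈ Ico (0:ℝ) c, u * w ≤ 1 :=
        fun w hw => le_trans (mul_le_mul_of_nonneg_left hw.2.le hu0) hucle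
      have hcontF : ContinuousOn (F β u) (Icc 0 c) := by
        have h := intervalIntegral.continuousOn_primitive_interval'
          (hint c hc.le hucle) (left_mem_uIcc (a := (0:ℝ)) (b := c))
        rw [uIcc_of_le hc.le] at h
        intro w hw
        have := h w hw
        exact this
      have hZI : Zset β u ∩ Ioi 0 = Ioo 0 (F β u c) := by
        rw [hZ]; ext w
        constructor
        · rintro ⟨⟨_, h2⟩, h3⟩; exact ⟨h3, h2⟩
        · rintro ⟨h1, h2⟩; exact ⟨⟨h1.le, h2⟩, h1⟩
      refine ⟨?_, ?_, ?_, ?_, ?_, ?_, ?_⟩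
      · rw [hZ, hD]
        refine ⟨?_, ?_, ?_⟩
        · intro w hw
          refine ⟨?_, ?_⟩
          · have := hmonoOn 0 w le_rfl hw.1 (hubIco w hw)
            rwa [hF0] at this
          · exact hmono w c hw.1 hw.2 hucle
        · intro a ha b hb hab
          by_contra hne
          rcases lt_or_gt_of_ne hne with h | h
          · exact absurd hab (hmono a b ha.1 h (hubIco b hb)).ne
          · exact absurd hab.symm (hmono b a hb.1 h (hubIco a ha)).ne
        · have h := intermediate_value_Ico hc.le hcontF
          rw [hF0] at h
          exact h
      · rw [hZ]; exact ⟨le_rfl, hFc⟩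
      · rw [hZ]; exact Ico_subset_Ici_self
      · rw [hZI]; exact isOpen_Ioo
      · rw [hZ, show Ico (0:ℝ) (F β u c) = Ici 0 ∩ Iio (F β u c) from (Ici_inter_Iio).symm]
        exact Filter.inter_mem self_mem_nhdsWithin
          (mem_nhdsWithin_of_mem_nhds (Iio_mem_nhds hFc))
      · rw [hZI, show Ioo (0:ℝ) (F β u c) = Ioi 0 ∩ Iio (F β u c) from (Ioi_inter_Iio).symm]
        exact Filter.inter_mem self_mem_nhdsWithin
          (mem_nhdsWithin_of_mem_nhds (Iio_mem_nhds hFc))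
      · rw [hZ]; exact uniqueDiffOn_Ico 0 _
  classical
  set Finv : ℝ → ℝ := Function.invFunOn (F β u) (Dy u) with hFinv_def
  have hInv : Set.InvOn Finv (F β u) (Dy u) (Zset β u) := hbij.invOn_invFunOn
  have hmapsinv : MapsTo Finv (Zset β u) (Dy u) := hbij.surjOn.mapsTo_invFunOn
  have hbij' : Set.BijOn Finv (Zset β u) (Dy u) := hInv.symm.bijOn hmapsinv hbij.mapsTo
  have himg : Finv '' (Zset β u) = Dy u := hbij'.image_eq
  have h0D : (0:ℝ) ∈ Dy u := ⟨le_rfl, by simp⟩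
  have hFinv0 : Finv 0 = 0 := by
    have h := hInv.1 h0D
    rwa [hF0] at h
  have hFpos : ∀ z ∈ Zset β u, 0 < z → 0 < Finv z := by
    intro z hz hz0
    rcases eq_or_lt_of_le (hmapsinv hz).1 with h | h
    · exfalso
      have h2 := hInv.2 hz
      rw [← h, hF0] at h2
      linarith
    · exact h
  have hFmonoZ : StrictMonoOn Finv (Zset β u) := by
    intro z1 h1 z2 h2 h12
    by_contra hcon
    push_neg at hcon
    have h3 := hmonoOn (Finv z2) (Finv z1) (hmapsinv h2).1 hcon (hmapsinv h1).2.le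
    rw [hInv.2 h1, hInv.2 h2] at h3
    linarith
  have hDnhds : ∀ y : ℝ, 0 < y → u * y < 1 → Dy u ∈ 𝓝 y := by
    intro y hy huy
    have hopen : IsOpen ({w : ℝ | 0 < w} ∩ {w : ℝ | u * w < 1}) :=
      (isOpen_lt continuous_const continuous_id).inter
        (isOpen_lt (continuous_const.mul continuous_id) continuous_const)
    exact Filter.mem_of_superset (hopen.mem_nhds ⟨hy, huy⟩) (fun w hw => ⟨hw.1.le, hw.2⟩)
  have hDGE : Dy u ∈ 𝓝[≥] (0:ℝ) := by
    have hopen1 : IsOpen {w : ℝ | u * w < 1} :=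
      isOpen_lt (continuous_const.mul continuous_id) continuous_const
    have h1 : Ici (0:ℝ) ∩ {w : ℝ | u * w < 1} ∈ 𝓝[≥] (0:ℝ) :=
      Filter.inter_mem self_mem_nhdsWithin
        (mem_nhdsWithin_of_mem_nhds (hopen1.mem_nhds (by simp)))
    exact Filter.mem_of_superset h1 (fun w hw => ⟨hw.1, hw.2⟩)
  have hcontAt : ∀ z ∈ Zset β u, 0 < z → ContinuousAt Finv z := by
    intro z hz hz0
    refine hFmonoZ.continuousAt_of_image_mem_nhds
      (Filter.mem_of_superset (hZopen.mem_nhds ⟨hz, hz0⟩) inter_subset_left) ?_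
    rw [himg]
    exact hDnhds _ (hFpos z hz hz0) (hmapsinv hz).2
  have hcontFinv : ContinuousOn Finv (Zset β u) := by
    intro z hz
    rcases eq_or_lt_of_le (mem_Ici.1 (hZsub hz)) with h | h
    · have hz0 : z = 0 := h.symm
      subst hz0
      have hca : ContinuousWithinAt Finv (Ici 0) 0 := by
        refine hFmonoZ.continuousWithinAt_right_of_image_mem_nhdsWithin hZGE ?_
        rw [himg, hFinv0]
        exact hDGE
      exact hca.mono hZsub
    · exact (hcontAt z hz h).continuousWithinAt
  have hDeriv : ∀ z ∈ Zset β u, 0 < z →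
      HasDerivAt Finv ((Finv z * (1 - u * Finv z)) ^ β) z := by
    intro z hz hz0
    have hy0 : 0 < Finv z := hFpos z hz hz0
    have hyD : Finv z ∈ Dy u := hmapsinv hz
    have hbase : 0 < Finv z * (1 - u * Finv z) := mul_pos hy0 (by linarith [hyD.2])
    have hFd : HasDerivAt (F β u) (f (Finv z)) (Finv z) := hderivF _ hy0 hyD.2
    have hev : ∀ᶠ w in 𝓝 z, F β u (Finv w) = w := by
      filter_upwards [hZopen.mem_nhds ⟨hz, hz0⟩] with w hw
      exact hInv.2 hw.1
    have h := hFd.of_local_left_inverse (hcontAt z hz hz0)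
      (ne_of_gt (hfpos _ hy0 hyD.2)) hev
    have heq : (f (Finv z))⁻¹ = (Finv z * (1 - u * Finv z)) ^ β := by
      show (((Finv z * (1 - u * Finv z))) ^ (-β))⁻¹ = _
      rw [Real.rpow_neg hbase.le, inv_inv]
    rwa [heq] at h
  have hFinvTendZ : Tendsto Finv (𝓝[Zset β u ∩ Ioi 0] 0) (𝓝 0) := by
    have h := (hcontFinv 0 h0Z).tendsto
    rw [hFinv0] at h
    exact h.mono_left (nhdsWithin_mono _ inter_subset_left)
  have hDeriv0 : HasDerivWithinAt Finv 0 (Zset β u) 0 := by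
    rw [hasDerivWithinAt_iff_tendsto_slope]
    have hsdiff : Zset β u \ {(0:ℝ)} = Zset β u ∩ Ioi 0 := by
      ext w
      constructor
      · rintro ⟨h1, h2⟩
        exact ⟨h1, lt_of_le_of_ne (hZsub h1) (Ne.symm h2)⟩
      · rintro ⟨h1, h2⟩
        exact ⟨h1, ne_of_gt h2⟩
    rw [hsdiff]
    have hbound : ∀ w ∈ Zset β u ∩ Ioi 0,
        slope Finv 0 w ≤ (1-β) * (Finv w) ^ β ∧ 0 ≤ slope Finv 0 w := by
      intro w hw
      obtain ⟨hwZ, hw0⟩ := hw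
      have hy0 : 0 < Finv w := hFpos w hwZ hw0
      have hyD : Finv w ∈ Dy u := hmapsinv hwZ
      set y : ℝ := Finv w with hy_def
      have hslope : slope Finv 0 w = y / w := by
        rw [slope_def_field, hFinv0, sub_zero, sub_zero]
      have hkey : y ^ (1-β) / (1-β) ≤ w := by
        have hwF : w = F β u y := (hInv.2 hwZ).symm
        have hcomp : ∫ v in (0:ℝ)..y, v ^ (-β) ≤ ∫ v in (0:ℝ)..y, f v := by
          refine intervalIntegral.integral_mono_on hy0.le
            (intervalIntegrable_rpow' (by linarith)) (hint y hy0.le hyD.2.le) ?_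
          rintro v ⟨hv0, hvy⟩
          rcases eq_or_lt_of_le hv0 with h | h
          · rw [← h]
            rw [Real.zero_rpow (neg_ne_zero.2 hβ0.ne')]
            exact hfnn 0 le_rfl (by simp)
          · have huv : u * v < 1 :=
              lt_of_le_of_lt (mul_le_mul_of_nonneg_left hvy hu0) hyD.2
            have hble : v * (1 - u * v) ≤ v := by nlinarith [mul_nonneg hu0 hv0]
            exact Real.rpow_le_rpow_of_nonpos
              (mul_pos h (by linarith)) hble (by linarith)
        have hrint : ∫ v in (0:ℝ)..y, v ^ (-β) = y ^ (1-β) / (1-β) := by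
          rw [integral_rpow (Or.inl (by linarith : (-1:ℝ) < -β))]
          rw [Real.zero_rpow (by linarith : -β + 1 ≠ 0)]
          rw [show -β + 1 = 1 - β by ring]
          ring
        rw [hwF, hFdef, ← hrint]
        exact hcomp
      have hm0 : 0 < y ^ (1-β) / (1-β) :=
        div_pos (Real.rpow_pos_of_pos hy0 _) (by linarith)
      have hmul : y ^ β * y ^ (1-β) = y := by
        rw [← Real.rpow_add hy0, show β + (1-β) = 1 by ring, Real.rpow_one]
      constructor
      · rw [hslope, div_le_iff₀ hw0]
        have h2 : y ^ β * (y ^ (1-β) / (1-β)) ≤ y ^ β * w :=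
          mul_le_mul_of_nonneg_left hkey (Real.rpow_nonneg hy0.le β)
        have h3 : y ^ β * (y ^ (1-β) / (1-β)) = y / (1-β) := by
          rw [mul_div_assoc'] -- (a * b) / c
          rw [hmul]
        rw [h3] at h2
        have h4 : y ≤ y ^ β * w * (1-β) := by
          have := (div_le_iff₀ (by linarith : (0:ℝ) < 1-β)).1 h2
          linarith
        nlinarith
      · rw [hslope]
        exact div_nonneg hy0.le hw0.le
    have hupperTend : Tendsto (fun w => (1-β) * (Finv w) ^ β)
        (𝓝[Zset β u ∩ Ioi 0] 0) (𝓝 0) := by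
      have hrpow : Tendsto (fun x : ℝ => x ^ β) (𝓝 0) (𝓝 0) := by
        have h := (Real.continuousAt_rpow_const 0 β (Or.inr hβ0.le)).tendsto
        rwa [Real.zero_rpow hβ0.ne'] at h
      have h := (hrpow.comp hFinvTendZ).const_mul (1-β)
      simpa using h
    refine tendsto_of_tendsto_of_tendsto_of_le_of_le' tendsto_const_nhds hupperTend ?_ ?_
    · filter_upwards [eventually_mem_nhdsWithin] with w hw
      exact (hbound w hw).2
    · filter_upwards [eventually_mem_nhdsWithin] with w hw
      exact (hbound w hw).1
  set g : ℝ → ℝ := fun z => (Finv z * (1 - u * Finv z)) ^ β with hg_def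
  have hg0 : g 0 = 0 := by
    rw [hg_def]
    show (Finv 0 * (1 - u * Finv 0)) ^ β = 0
    rw [hFinv0]
    simp [Real.zero_rpow hβ0.ne']
  have hgcont : ContinuousOn g (Zset β u) := by
    have hinner : ContinuousOn (fun z => Finv z * (1 - u * Finv z)) (Zset β u) :=
      hcontFinv.mul (continuousOn_const.sub (continuousOn_const.mul hcontFinv))
    intro z hz
    exact (Real.continuousAt_rpow_const _ β (Or.inr hβ0.le)).comp_continuousWithinAt
      (hinner z hz)
  have hdw : ∀ z ∈ Zset β u, HasDerivWithinAt Finv (g z) (Zset β u) z := by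
    intro z hz
    rcases eq_or_lt_of_le (mem_Ici.1 (hZsub hz)) with h | h
    · have hz0 : z = 0 := h.symm
      subst hz0
      rw [hg0]
      exact hDeriv0
    · exact (hDeriv z hz h).hasDerivWithinAt
  have hContDiff : ContDiffOn ℝ 1 Finv (Zset β u) := by
    rw [show (1 : WithTop ℕ∞) = 0 + 1 by norm_num,
      contDiffOn_succ_iff_derivWithin hUD]
    refine ⟨fun z hz => (hdw z hz).differentiableWithinAt, ?_, ?_⟩
    · intro h; simp at h
    · rw [contDiffOn_zero]
      exact hgcont.congr (fun z hz => (hdw z hz).derivWithin (hUD z hz))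
  have hTendsto : Tendsto (deriv Finv) (𝓝[>] (0:ℝ)) (𝓝 0) := by
    have hev : ∀ᶠ w in 𝓝[>] (0:ℝ), g w = deriv Finv w := by
      filter_upwards [hZIoi] with w hw
      exact ((hDeriv w hw.1 hw.2).deriv).symm
    have hgt : Tendsto g (𝓝[>] (0:ℝ)) (𝓝 0) := by
      have h1 : Tendsto g (𝓝[Zset β u] 0) (𝓝 0) := by
        have h := (hgcont 0 h0Z).tendsto
        rwa [hg0] at h
      exact h1.mono_left (nhdsWithin_le_of_mem
        (Filter.mem_of_superset hZIoi inter_subset_left))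
    exact hgt.congr' hev
  exact ⟨Finv, hbij, hInv, hContDiff, hDeriv, hTendsto⟩
end

section
/- There exists a constant l > 0 such that (G ∘ F₁⁻¹)'(z) < -l for every z ∈ (0, F₁(1)); in particular, G ∘ F₁⁻¹ is strictly decreasing on (0, F₁(1)). -/
open Set MeasureTheory intervalIntegral

noncomputable def F1 (β y : ℝ) : ℝ := ∫ v in (0:ℝ)..y, (v * (1 - v)) ^ (-β)

noncomputable def F1inv (β z : ℝ) : ℝ := Function.invFunOn (F1 β) (Set.Icc 0 1) z

noncomputable def G (β θ μ x : ℝ) : ℝ := θ * (μ - x) * (x * (1 - x)) ^ (-β)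

section aux

variable {β : ℝ}

lemma fcont : ContinuousOn (fun v : ℝ => (v * (1 - v)) ^ (-β)) (Set.Ioo 0 1) := by
  apply ContinuousOn.rpow_const
    (continuous_id.mul (continuous_const.sub continuous_id)).continuousOn
  intro x hx
  left
  obtain ⟨h1, h2⟩ := hx
  simp only [Pi.mul_apply, Pi.sub_apply, id_eq]
  exact ne_of_gt (by nlinarith)

lemma fint (hβ : β ∈ Set.Ioo (0:ℝ) 1) :
    IntervalIntegrable (fun v : ℝ => (v * (1 - v)) ^ (-β)) volume 0 1 := by
  obtain ⟨hβ0, hβ1⟩ := hβ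
  have hg : IntervalIntegrable
      (fun v : ℝ => (2:ℝ) ^ β * (v ^ (-β) + (1 - v) ^ (-β))) volume 0 1 := by
    apply IntervalIntegrable.const_mul
    apply IntervalIntegrable.add
    · exact intervalIntegral.intervalIntegrable_rpow' (by linarith)
    · have h := intervalIntegral.intervalIntegrable_rpow'
        (a := 0) (b := 1) (r := -β) (by linarith)
      have := (h.comp_sub_left 1).symm
      simpa using this
  rw [intervalIntegrable_iff_integrableOn_Ioo_of_le (by norm_num)] at hg ⊢
  apply hg.mono' (fcont.aestronglyMeasurable measurableSet_Ioo)
  filter_upwards [ae_restrict_mem measurableSet_Ioo] with v hv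
  obtain ⟨hv0, hv1⟩ := hv
  have hv1' : 0 < 1 - v := by linarith
  have hb2 : (0:ℝ) < 2 ^ β := Real.rpow_pos_of_pos (by norm_num) β
  have hpos : 0 < v * (1 - v) := mul_pos hv0 hv1'
  rw [Real.norm_of_nonneg (Real.rpow_nonneg hpos.le _)]
  rcases le_total v (1/2) with hc | hc
  · have h1 : v / 2 ≤ v * (1 - v) := by nlinarith
    have h2 : (v * (1 - v)) ^ (-β) ≤ (v / 2) ^ (-β) :=
      Real.rpow_le_rpow_of_nonpos (by positivity) h1 (by linarith)
    have h3 : (v / 2 : ℝ) ^ (-β) = 2 ^ β * v ^ (-β) := by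
      rw [Real.div_rpow hv0.le (by norm_num),
        Real.rpow_neg (by norm_num : (0:ℝ) ≤ 2), div_eq_mul_inv, inv_inv, mul_comm]
    have h4 : (0:ℝ) ≤ 2 ^ β * (1 - v) ^ (-β) := by positivity
    calc (v * (1 - v)) ^ (-β) ≤ 2 ^ β * v ^ (-β) := h3 ▸ h2
      _ ≤ 2 ^ β * (v ^ (-β) + (1 - v) ^ (-β)) := by nlinarith [Real.rpow_nonneg hv1'.le (-β)]
  · have h1 : (1 - v) / 2 ≤ v * (1 - v) := by nlinarith
    have h2 : (v * (1 - v)) ^ (-β) ≤ ((1 - v) / 2) ^ (-β) :=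
      Real.rpow_le_rpow_of_nonpos (by positivity) h1 (by linarith)
    have h3 : ((1 - v) / 2 : ℝ) ^ (-β) = 2 ^ β * (1 - v) ^ (-β) := by
      rw [Real.div_rpow hv1'.le (by norm_num),
        Real.rpow_neg (by norm_num : (0:ℝ) ≤ 2), div_eq_mul_inv, inv_inv, mul_comm]
    calc (v * (1 - v)) ^ (-β) ≤ 2 ^ β * (1 - v) ^ (-β) := h3 ▸ h2
      _ ≤ 2 ^ β * (v ^ (-β) + (1 - v) ^ (-β)) := by nlinarith [Real.rpow_nonneg hv0.le (-β)]

lemma fint' (hβ : β ∈ Set.Ioo (0:ℝ) 1) {a b : ℝ} (ha : a ∈ Set.Icc (0:ℝ) 1)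
    (hb : b ∈ Set.Icc (0:ℝ) 1) :
    IntervalIntegrable (fun v : ℝ => (v * (1 - v)) ^ (-β)) volume a b := by
  apply (fint hβ).mono_set
  rw [Set.uIcc_subset_uIcc_iff_mem]
  constructor <;> [skip; skip] <;>
    simp [Set.uIcc_of_le (show (0:ℝ) ≤ 1 by norm_num), ha.1, ha.2, hb.1, hb.2]

lemma F1_zero : F1 β 0 = 0 := by simp [F1]

lemma F1_strictMonoOn (hβ : β ∈ Set.Ioo (0:ℝ) 1) : StrictMonoOn (F1 β) (Set.Icc 0 1) := by
  intro a ha b hb hab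
  have key : 0 < ∫ v in a..b, (v * (1 - v)) ^ (-β) := by
    apply intervalIntegral.intervalIntegral_pos_of_pos_on (fint' hβ ha hb) _ hab
    intro x hx
    have hx0 : 0 < x := lt_of_le_of_lt ha.1 hx.1
    have hx1 : x < 1 := lt_of_lt_of_le hx.2 hb.2
    exact Real.rpow_pos_of_pos (by nlinarith) _
  have hsplit : F1 β a + ∫ v in a..b, (v * (1 - v)) ^ (-β) = F1 β b :=
    intervalIntegral.integral_add_adjacent_intervals
      (fint' hβ (Set.mem_Icc.mpr (by norm_num)) ha) (fint' hβ ha hb)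
  linarith

lemma F1_hasDerivAt (hβ : β ∈ Set.Ioo (0:ℝ) 1) {y : ℝ} (hy : y ∈ Set.Ioo (0:ℝ) 1) :
    HasDerivAt (F1 β) ((y * (1 - y)) ^ (-β)) y := by
  apply intervalIntegral.integral_hasDerivAt_right
    (fint' hβ (Set.mem_Icc.mpr (by norm_num)) (Set.mem_Icc.mpr ⟨hy.1.le, hy.2.le⟩))
    (ContinuousOn.stronglyMeasurableAtFilter isOpen_Ioo fcont y hy)
  apply ContinuousAt.rpow_const
  · exact (continuous_id.mul (continuous_const.sub continuous_id)).continuousAt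
  · left
    have := hy.1; have := hy.2; nlinarith

lemma F1_continuousOn (hβ : β ∈ Set.Ioo (0:ℝ) 1) : ContinuousOn (F1 β) (Set.Icc 0 1) := by
  have h := fint hβ
  rw [intervalIntegrable_iff_integrableOn_Ioo_of_le (by norm_num)] at h
  have h2 : IntegrableOn (fun v : ℝ => (v * (1 - v)) ^ (-β)) (Set.uIcc 0 1) := by
    rw [Set.uIcc_of_le (by norm_num : (0:ℝ) ≤ 1)]
    exact (integrableOn_Icc_iff_integrableOn_Ioo).2 h
  have := intervalIntegral.continuousOn_primitive_interval h2
  rw [Set.uIcc_of_le (by norm_num : (0:ℝ) ≤ 1)] at this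
  exact this

lemma F1inv_spec (hβ : β ∈ Set.Ioo (0:ℝ) 1) {z : ℝ} (hz : z ∈ Set.Ioo 0 (F1 β 1)) :
    F1inv β z ∈ Set.Ioo (0:ℝ) 1 ∧ F1 β (F1inv β z) = z := by
  have hzIcc : z ∈ Set.Icc (F1 β 0) (F1 β 1) := by
    rw [F1_zero]; exact ⟨hz.1.le, hz.2.le⟩
  have hsurj := intermediate_value_Icc (by norm_num : (0:ℝ) ≤ 1) (F1_continuousOn hβ)
  obtain ⟨y', hy', hfy'⟩ := hsurj hzIcc
  have hmem : F1inv β z ∈ Set.Icc (0:ℝ) 1 :=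
    Function.invFunOn_mem ⟨y', hy', hfy'⟩
  have heq : F1 β (F1inv β z) = z := Function.invFunOn_eq ⟨y', hy', hfy'⟩
  refine ⟨⟨lt_of_le_of_ne hmem.1 ?_, lt_of_le_of_ne hmem.2 ?_⟩, heq⟩
  · intro h
    rw [← h] at heq
    rw [F1_zero] at heq
    exact absurd heq (ne_of_lt hz.1)
  · intro h
    rw [h] at heq
    exact absurd heq.symm (ne_of_lt hz.2)

lemma F1_mem_Ioo (hβ : β ∈ Set.Ioo (0:ℝ) 1) {y : ℝ} (hy : y ∈ Set.Ioo (0:ℝ) 1) :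
    F1 β y ∈ Set.Ioo 0 (F1 β 1) := by
  constructor
  · have := F1_strictMonoOn hβ (Set.left_mem_Icc.2 (by norm_num))
      (Set.mem_Icc.mpr ⟨hy.1.le, hy.2.le⟩) hy.1
    rwa [F1_zero] at this
  · exact F1_strictMonoOn hβ (Set.mem_Icc.mpr ⟨hy.1.le, hy.2.le⟩) (Set.right_mem_Icc.2 (by norm_num)) hy.2

lemma F1inv_F1 (hβ : β ∈ Set.Ioo (0:ℝ) 1) {y : ℝ} (hy : y ∈ Set.Ioo (0:ℝ) 1) :
    F1inv β (F1 β y) = y :=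
  (F1_strictMonoOn hβ).injOn.leftInvOn_invFunOn (Set.mem_Icc.mpr ⟨hy.1.le, hy.2.le⟩)

lemma F1inv_strictMonoOn (hβ : β ∈ Set.Ioo (0:ℝ) 1) :
    StrictMonoOn (F1inv β) (Set.Ioo 0 (F1 β 1)) := by
  intro z1 hz1 z2 hz2 h12
  obtain ⟨hy1, he1⟩ := F1inv_spec hβ hz1
  obtain ⟨hy2, he2⟩ := F1inv_spec hβ hz2
  by_contra hle
  push_neg at hle
  have := (F1_strictMonoOn hβ).monotoneOn (Set.mem_Icc.mpr ⟨hy2.1.le, hy2.2.le⟩) (Set.mem_Icc.mpr ⟨hy1.1.le, hy1.2.le⟩) hle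
  rw [he1, he2] at this
  exact absurd h12 (not_lt.2 this)

lemma F1inv_image (hβ : β ∈ Set.Ioo (0:ℝ) 1) :
    Set.Ioo (0:ℝ) 1 ⊆ F1inv β '' (Set.Ioo 0 (F1 β 1)) := by
  intro y hy
  exact ⟨F1 β y, F1_mem_Ioo hβ hy, F1inv_F1 hβ hy⟩

lemma F1inv_continuousAt (hβ : β ∈ Set.Ioo (0:ℝ) 1) {z : ℝ} (hz : z ∈ Set.Ioo 0 (F1 β 1)) :
    ContinuousAt (F1inv β) z := by
  apply (F1inv_strictMonoOn hβ).continuousAt_of_image_mem_nhds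
    (isOpen_Ioo.mem_nhds hz)
  apply Filter.mem_of_superset (isOpen_Ioo.mem_nhds ((F1inv_spec hβ hz).1))
  exact F1inv_image hβ

lemma F1inv_hasDerivAt (hβ : β ∈ Set.Ioo (0:ℝ) 1) {z : ℝ} (hz : z ∈ Set.Ioo 0 (F1 β 1)) :
    HasDerivAt (F1inv β) (((F1inv β z * (1 - F1inv β z)) ^ (-β))⁻¹) z := by
  obtain ⟨hy, he⟩ := F1inv_spec hβ hz
  apply HasDerivAt.of_local_left_inverse (F1inv_continuousAt hβ hz)
    (by rw [← he] at hy ⊢; exact F1_hasDerivAt hβ hy)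
  · have h1 : 0 < F1inv β z := hy.1
    have h2 : F1inv β z < 1 := hy.2
    exact ne_of_gt (Real.rpow_pos_of_pos (by nlinarith) _)
  · filter_upwards [isOpen_Ioo.mem_nhds hz] with z' hz'
    exact (F1inv_spec hβ hz').2

end aux

theorem stmt8 (β θ μ : ℝ) (hβ : β ∈ Set.Ioo (0:ℝ) 1) (hθ : 0 < θ)
    (hμ : μ ∈ Set.Ioo (0:ℝ) 1) :
    ∃ l : ℝ, 0 < l ∧
      (∀ z ∈ Set.Ioo 0 (F1 β 1),
        ∃ d : ℝ, HasDerivAt (fun z' => G β θ μ (F1inv β z')) d z ∧ d < -l) ∧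
      StrictAntiOn (fun z => G β θ μ (F1inv β z)) (Set.Ioo 0 (F1 β 1)) := by
  obtain ⟨hβ0, hβ1⟩ := hβ
  obtain ⟨hμ0, hμ1⟩ := hμ
  have hl : 0 < θ * (1 - β) := by nlinarith
  have key : ∀ z ∈ Set.Ioo 0 (F1 β 1),
      ∃ d : ℝ, HasDerivAt (fun z' => G β θ μ (F1inv β z')) d z ∧ d < -(θ * (1 - β)) := by
    intro z hz
    obtain ⟨hy, he⟩ := F1inv_spec ⟨hβ0, hβ1⟩ hz
    set y := F1inv β z with hydef
    have hy0 : 0 < y := hy.1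
    have hy1 : y < 1 := hy.2
    have hA : 0 < y * (1 - y) := by nlinarith
    have hw : 0 < (y * (1 - y)) ^ (-β) := Real.rpow_pos_of_pos hA _
    -- derivative of G at y
    have h1 : HasDerivAt (fun x : ℝ => x * (1 - x)) (1 - 2 * y) y := by
      have := (hasDerivAt_id y).mul ((hasDerivAt_const y (1:ℝ)).sub (hasDerivAt_id y))
      refine this.congr_deriv ?_
      simp only [Pi.sub_apply, id_eq]
      ring
    have h2 : HasDerivAt (fun x : ℝ => (x * (1 - x)) ^ (-β))
        ((1 - 2 * y) * (-β) * (y * (1 - y)) ^ (-β - 1)) y :=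
      h1.rpow_const (Or.inl (ne_of_gt hA))
    have h3 : HasDerivAt (fun x : ℝ => θ * (μ - x)) (-θ) y := by
      have := (hasDerivAt_const y θ).mul ((hasDerivAt_const y μ).sub (hasDerivAt_id y))
      refine this.congr_deriv ?_
      simp only [Pi.sub_apply, id_eq]
      ring
    have hG : HasDerivAt (G β θ μ)
        ((-θ) * (y * (1 - y)) ^ (-β)
          + (θ * (μ - y)) * ((1 - 2 * y) * (-β) * (y * (1 - y)) ^ (-β - 1))) y := h3.mul h2
    have hInv := F1inv_hasDerivAt ⟨hβ0, hβ1⟩ hz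
    have hcomp := hG.comp z hInv
    refine ⟨_, hcomp, ?_⟩
    -- simplify the derivative value
    have hrw : (y * (1 - y)) ^ (-β - 1) = (y * (1 - y)) ^ (-β) / (y * (1 - y)) := by
      rw [show -β - 1 = -β - 1 from rfl, Real.rpow_sub hA, Real.rpow_one]
    rw [hrw]
    have hwne : ((y * (1 - y)) ^ (-β)) ≠ 0 := ne_of_gt hw
    have hAne : y * (1 - y) ≠ 0 := ne_of_gt hA
    have heval : ((-θ) * (y * (1 - y)) ^ (-β)
          + (θ * (μ - y)) * ((1 - 2 * y) * (-β) * ((y * (1 - y)) ^ (-β) / (y * (1 - y)))))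
          * ((y * (1 - y)) ^ (-β))⁻¹
        = -θ - θ * β * ((μ - y) * (1 - 2 * y)) / (y * (1 - y)) := by
      field_simp
      ring
    rw [heval]
    have hnum : -(y * (1 - y)) < (μ - y) * (1 - 2 * y) := by nlinarith [sq_nonneg (y - μ)]
    have hc : -1 < (μ - y) * (1 - 2 * y) / (y * (1 - y)) := by
      rw [neg_lt, ← neg_div, div_lt_iff₀ hA]
      nlinarith
    have hc' := mul_lt_mul_of_pos_left hc (mul_pos hθ hβ0)
    rw [mul_div_assoc]
    nlinarith [hc']
  refine ⟨θ * (1 - β), hl, key, ?_⟩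
  apply strictAntiOn_of_deriv_neg (convex_Ioo _ _)
  · intro z hz
    obtain ⟨d, hd, _⟩ := key z hz
    exact hd.continuousAt.continuousWithinAt
  · intro z hz
    rw [interior_Ioo] at hz
    obtain ⟨d, hd, hdl⟩ := key z hz
    rw [hd.deriv]
    nlinarith
end

section
/- Let y₀¹, y₀² ∈ (0, F₁(1)) with y₀¹ < y₀², and for i = 1,2 let y(y₀ⁱ) : ℝ₊ → (0, F₁(1)) be the continuous solution of y_t = y₀ⁱ + ∫₀^t (G ∘ F₁⁻¹)(y_s) ds + γθ^β w_t. Then y_t(y₀¹) < y_t(y₀²) for every t ∈ ℝ₊; that is, for each fixed t the map y₀ ↦ y_t(y₀) is strictly increasing on (0, F₁(1)). -/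
open Set MeasureTheory intervalIntegral

namespace Stmt12Aux

lemma kern_int {β : ℝ} (hβ0 : 0 < β) (hβ1 : β < 1) :
    IntervalIntegrable (fun v : ℝ => (v * (1 - v)) ^ (-β)) volume 0 1 := by
  have hmb : (-1:ℝ) < -β := by linarith
  have h1 : IntervalIntegrable (fun v : ℝ => (v * (1 - v)) ^ (-β)) volume 0 (1/2) := by
    have hg : IntervalIntegrable (fun v : ℝ => 2 ^ β * v ^ (-β)) volume 0 (1/2) :=
      (intervalIntegrable_rpow' hmb).const_mul _
    refine hg.mono_fun' ?_ ?_
    · rw [uIoc_of_le (by norm_num : (0:ℝ) ≤ 1/2)]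
      refine ContinuousOn.aestronglyMeasurable ?_ measurableSet_Ioc
      intro v hv
      have h0 : (0:ℝ) < v := hv.1
      have h1 : (0:ℝ) < 1 - v := by have := hv.2; linarith
      have hb : v * (1 - v) ≠ 0 := by positivity
      exact (ContinuousAt.rpow_const
        (by fun_prop : ContinuousAt (fun v : ℝ => v * (1 - v)) v) (Or.inl hb)).continuousWithinAt
    · rw [uIoc_of_le (by norm_num : (0:ℝ) ≤ 1/2)]
      filter_upwards [ae_restrict_mem measurableSet_Ioc] with v hv
      have hv0 : 0 < v := hv.1
      have hv2 : v ≤ 1/2 := hv.2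
      have h1v : (0:ℝ) < 1 - v := by linarith
      have hsplit : (v * (1 - v)) ^ (-β) = v ^ (-β) * (1 - v) ^ (-β) :=
        Real.mul_rpow hv0.le h1v.le
      have hle : (1 - v) ^ (-β) ≤ (2:ℝ) ^ β := by
        have : (1 - v) ^ (-β) ≤ ((1:ℝ)/2) ^ (-β) :=
          Real.rpow_le_rpow_of_nonpos (by norm_num) (by linarith) (by linarith)
        calc (1 - v) ^ (-β) ≤ ((1:ℝ)/2) ^ (-β) := this
        _ = (2:ℝ) ^ β := by
            rw [one_div, Real.inv_rpow (by norm_num : (0:ℝ) ≤ 2),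
              Real.rpow_neg (by norm_num : (0:ℝ) ≤ 2), inv_inv]
      have hnn : 0 ≤ (v * (1 - v)) ^ (-β) := Real.rpow_nonneg (by positivity) _
      have hvnn : 0 ≤ v ^ (-β) := Real.rpow_nonneg hv0.le _
      rw [Real.norm_eq_abs, abs_of_nonneg hnn, hsplit, mul_comm]
      exact mul_le_mul_of_nonneg_right hle hvnn
  have h2 : IntervalIntegrable (fun v : ℝ => (v * (1 - v)) ^ (-β)) volume (1/2) 1 := by
    have hg0 : IntervalIntegrable (fun v : ℝ => v ^ (-β)) volume 0 (1/2) :=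
      intervalIntegrable_rpow' hmb
    have hg1 : IntervalIntegrable (fun v : ℝ => (1 - v) ^ (-β)) volume (1/2) 1 := by
      have := (hg0.comp_sub_left 1).symm
      norm_num at this ⊢
      exact this
    have hg : IntervalIntegrable (fun v : ℝ => 2 ^ β * (1 - v) ^ (-β)) volume (1/2) 1 :=
      hg1.const_mul _
    refine hg.mono_fun' ?_ ?_
    · rw [uIoc_of_le (by norm_num : (1:ℝ)/2 ≤ 1),
        ← Measure.restrict_congr_set Ioo_ae_eq_Ioc]
      refine ContinuousOn.aestronglyMeasurable ?_ measurableSet_Ioo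
      intro v hv
      have h0 : (0:ℝ) < v := by have := hv.1; linarith
      have h1 : (0:ℝ) < 1 - v := by have := hv.2; linarith
      have hb : v * (1 - v) ≠ 0 := by positivity
      exact (ContinuousAt.rpow_const
        (by fun_prop : ContinuousAt (fun v : ℝ => v * (1 - v)) v) (Or.inl hb)).continuousWithinAt
    · rw [uIoc_of_le (by norm_num : (1:ℝ)/2 ≤ 1)]
      filter_upwards [ae_restrict_mem measurableSet_Ioc] with v hv
      have hv0 : (0:ℝ) < v := by have := hv.1; linarith
      have hv1 : v ≤ 1 := hv.2
      have hnn : 0 ≤ (v * (1 - v)) ^ (-β) := Real.rpow_nonneg (by nlinarith) _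
      rw [Real.norm_eq_abs, abs_of_nonneg hnn]
      rcases eq_or_lt_of_le hv1 with rfl | hv1'
      · rw [show (1:ℝ) - 1 = 0 by ring, mul_zero, Real.zero_rpow (by linarith)]
        positivity
      · have h1v : (0:ℝ) < 1 - v := by linarith
        have hsplit : (v * (1 - v)) ^ (-β) = v ^ (-β) * (1 - v) ^ (-β) :=
          Real.mul_rpow hv0.le h1v.le
        have hle : v ^ (-β) ≤ (2:ℝ) ^ β := by
          calc v ^ (-β) ≤ ((1:ℝ)/2) ^ (-β) :=
            Real.rpow_le_rpow_of_nonpos (by norm_num) (by have := hv.1; linarith) (by linarith)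
          _ = (2:ℝ) ^ β := by
            rw [one_div, Real.inv_rpow (by norm_num : (0:ℝ) ≤ 2),
              Real.rpow_neg (by norm_num : (0:ℝ) ≤ 2), inv_inv]
        have hnn2 : 0 ≤ (1 - v) ^ (-β) := Real.rpow_nonneg h1v.le _
        rw [hsplit]
        exact mul_le_mul_of_nonneg_right hle hnn2
  exact h1.trans h2


lemma kern_int' {β : ℝ} (hβ0 : 0 < β) (hβ1 : β < 1) {a b : ℝ}
    (ha : a ∈ Icc (0:ℝ) 1) (hb : b ∈ Icc (0:ℝ) 1) :
    IntervalIntegrable (fun v : ℝ => (v * (1 - v)) ^ (-β)) volume a b :=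
  (kern_int hβ0 hβ1).mono_set (by
    rw [uIcc_of_le (by norm_num : (0:ℝ) ≤ 1)]
    exact uIcc_subset_Icc ha hb)

lemma F1_sub {β : ℝ} (hβ0 : 0 < β) (hβ1 : β < 1) {a b : ℝ}
    (ha : a ∈ Icc (0:ℝ) 1) (hb : b ∈ Icc (0:ℝ) 1) :
    F1 β b - F1 β a = ∫ v in a..b, (v * (1 - v)) ^ (-β) := by
  have h1 : IntervalIntegrable (fun v : ℝ => (v * (1 - v)) ^ (-β)) volume 0 a :=
    kern_int' hβ0 hβ1 (by norm_num) ha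
  have h2 : IntervalIntegrable (fun v : ℝ => (v * (1 - v)) ^ (-β)) volume a b :=
    kern_int' hβ0 hβ1 ha hb
  have := integral_add_adjacent_intervals h1 h2
  unfold F1
  linarith [this]

lemma F1_grows {β : ℝ} (hβ0 : 0 < β) (hβ1 : β < 1) {a b : ℝ}
    (ha : a ∈ Icc (0:ℝ) 1) (hb : b ∈ Icc (0:ℝ) 1) (hab : a ≤ b) :
    b - a ≤ F1 β b - F1 β a := by
  rw [F1_sub hβ0 hβ1 ha hb]
  have hone : (b - a) = ∫ _ in a..b, (1:ℝ) := by simp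
  rw [hone]
  refine integral_mono_ae_restrict hab intervalIntegrable_const
    (kern_int' hβ0 hβ1 ha hb) ?_
  have h01 : ∀ᵐ v ∂(volume : Measure ℝ), v ≠ 0 ∧ v ≠ 1 := by
    rw [ae_iff]
    refine measure_mono_null (fun v hv => ?_) (((Set.finite_singleton (1:ℝ)).insert 0).measure_zero volume)
    simp only [mem_setOf_eq, not_and_or, not_not] at hv
    rcases hv with h | h <;> simp [h]
  filter_upwards [ae_restrict_of_ae h01, ae_restrict_mem measurableSet_Icc] with v hv hmem
  have hv0 : 0 < v := lt_of_le_of_ne (le_trans ha.1 hmem.1) (Ne.symm hv.1)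
  have hv1 : v < 1 := lt_of_le_of_ne (le_trans hmem.2 hb.2) hv.2
  have hbase0 : 0 < v * (1 - v) := by nlinarith
  have hbase1 : v * (1 - v) ≤ 1 := by nlinarith
  calc (1:ℝ) = (v * (1 - v)) ^ (0:ℝ) := (Real.rpow_zero _).symm
  _ ≤ (v * (1 - v)) ^ (-β) :=
      Real.rpow_le_rpow_of_exponent_ge hbase0 hbase1 (by linarith)

lemma F1_zero (β : ℝ) : F1 β 0 = 0 := integral_same

lemma F1_one_pos {β : ℝ} (hβ0 : 0 < β) (hβ1 : β < 1) : 1 ≤ F1 β 1 := by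
  have := F1_grows hβ0 hβ1 (left_mem_Icc.2 zero_le_one) (right_mem_Icc.2 zero_le_one)
    zero_le_one
  rw [F1_zero] at this; linarith

lemma F1_contOn {β : ℝ} (hβ0 : 0 < β) (hβ1 : β < 1) :
    ContinuousOn (F1 β) (Icc 0 1) := by
  have := continuousOn_primitive_interval' (kern_int hβ0 hβ1) left_mem_uIcc
  rwa [uIcc_of_le zero_le_one] at this

lemma F1_surj {β : ℝ} (hβ0 : 0 < β) (hβ1 : β < 1) {z : ℝ}
    (hz : z ∈ Icc 0 (F1 β 1)) : ∃ x ∈ Icc (0:ℝ) 1, F1 β x = z := by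
  have := intermediate_value_Icc zero_le_one (F1_contOn hβ0 hβ1)
  rw [F1_zero] at this
  obtain ⟨x, hx, hfx⟩ := this hz
  exact ⟨x, hx, hfx⟩

lemma F1inv_mem {β : ℝ} (hβ0 : 0 < β) (hβ1 : β < 1) {z : ℝ}
    (hz : z ∈ Icc 0 (F1 β 1)) :
    F1inv β z ∈ Icc (0:ℝ) 1 ∧ F1 β (F1inv β z) = z := by
  obtain ⟨x, hx, hfx⟩ := F1_surj hβ0 hβ1 hz
  exact ⟨Function.invFunOn_mem ⟨x, hx, hfx⟩, Function.invFunOn_eq ⟨x, hx, hfx⟩⟩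

lemma F1inv_lip {β : ℝ} (hβ0 : 0 < β) (hβ1 : β < 1) {a b : ℝ}
    (ha : a ∈ Icc 0 (F1 β 1)) (hb : b ∈ Icc 0 (F1 β 1)) :
    |F1inv β a - F1inv β b| ≤ |a - b| := by
  obtain ⟨hma, hfa⟩ := F1inv_mem hβ0 hβ1 ha
  obtain ⟨hmb, hfb⟩ := F1inv_mem hβ0 hβ1 hb
  rcases le_total (F1inv β b) (F1inv β a) with h | h
  · have := F1_grows hβ0 hβ1 hmb hma h
    rw [hfa, hfb] at this
    rw [abs_of_nonneg (by linarith)]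
    calc F1inv β a - F1inv β b ≤ a - b := by linarith
    _ ≤ |a - b| := le_abs_self _
  · have := F1_grows hβ0 hβ1 hma hmb h
    rw [hfa, hfb] at this
    rw [abs_of_nonpos (by linarith), neg_sub, abs_sub_comm]
    calc F1inv β b - F1inv β a ≤ b - a := by linarith
    _ ≤ |b - a| := le_abs_self _

lemma F1inv_mem_Ioo {β : ℝ} (hβ0 : 0 < β) (hβ1 : β < 1) {z : ℝ}
    (hz : z ∈ Ioo 0 (F1 β 1)) : F1inv β z ∈ Ioo (0:ℝ) 1 := by
  have hz' : z ∈ Icc 0 (F1 β 1) := ⟨hz.1.le, hz.2.le⟩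
  obtain ⟨hm, hf⟩ := F1inv_mem hβ0 hβ1 hz'
  constructor
  · rcases eq_or_lt_of_le hm.1 with h | h
    · exfalso; rw [← h, F1_zero] at hf; exact absurd hf.symm (ne_of_gt hz.1)
    · exact h
  · rcases eq_or_lt_of_le hm.2 with h | h
    · exfalso; rw [h] at hf; exact absurd hf (by intro hc; rw [hc] at hz; exact lt_irrefl _ hz.2)
    · exact h


lemma G_contOn {β θ μ : ℝ} : ContinuousOn (G β θ μ) (Ioo 0 1) := by
  intro x hx
  have h0 := hx.1
  have h1 : (0:ℝ) < 1 - x := by have := hx.2; linarith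
  have hb : x * (1 - x) ≠ 0 := by positivity
  have : ContinuousAt (fun x : ℝ => θ * (μ - x) * (x * (1 - x)) ^ (-β)) x :=
    ContinuousAt.mul (by fun_prop)
      (ContinuousAt.rpow_const (by fun_prop : ContinuousAt (fun x : ℝ => x * (1 - x)) x)
        (Or.inl hb))
  exact this.continuousWithinAt

lemma G_lip {β θ μ : ℝ} (hβ0 : 0 < β) (hθ : 0 < θ) (hμ0 : 0 < μ) (hμ1 : μ < 1)
    {c d : ℝ} (hc : 0 < c) (hd : d < 1) {x y : ℝ}
    (hx : x ∈ Icc c d) (hy : y ∈ Icc c d) :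
    |G β θ μ x - G β θ μ y| ≤
      (θ * (β * (c * (1 - d)) ^ (-β - 1) + (c * (1 - d)) ^ (-β))) * |x - y| := by
  set e := c * (1 - d) with he
  have hcd : c ≤ d := le_trans hx.1 hx.2
  have hepos : 0 < e := by rw [he]; nlinarith
  have hx0 : 0 < x := lt_of_lt_of_le hc hx.1
  have hx1 : x < 1 := lt_of_le_of_lt hx.2 hd
  have hy0 : 0 < y := lt_of_lt_of_le hc hy.1
  have hy1 : y < 1 := lt_of_le_of_lt hy.2 hd
  have hbx : e ≤ x * (1 - x) := by rw [he]; nlinarith [hx.1, hx.2]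
  have hby : e ≤ y * (1 - y) := by rw [he]; nlinarith [hy.1, hy.2]
  have hq : ∀ u ∈ Ici e, ∀ w ∈ Ici e,
      |u ^ (-β) - w ^ (-β)| ≤ (β * e ^ (-β - 1)) * |u - w| := by
    intro u hu w hw
    have key := Convex.norm_image_sub_le_of_norm_hasDerivWithin_le
      (f := fun u : ℝ => u ^ (-β)) (f' := fun u : ℝ => -β * u ^ (-β - 1))
      (s := Ici e) (C := β * e ^ (-β - 1)) ?_ ?_ (convex_Ici e) hw hu
    · simpa [Real.norm_eq_abs] using key
    · intro z hz
      have hz0 : z ≠ 0 := ne_of_gt (lt_of_lt_of_le hepos hz)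
      exact (Real.hasDerivAt_rpow_const (Or.inl hz0)).hasDerivWithinAt
    · intro z hz
      have hz0 : 0 < z := lt_of_lt_of_le hepos hz
      rw [Real.norm_eq_abs, abs_mul, abs_neg, abs_of_pos hβ0,
        abs_of_nonneg (Real.rpow_nonneg hz0.le _)]
      exact mul_le_mul_of_nonneg_left
        (Real.rpow_le_rpow_of_nonpos hepos hz (by linarith)) hβ0.le
  have hpxy : |(x * (1 - x)) ^ (-β) - (y * (1 - y)) ^ (-β)| ≤
      (β * e ^ (-β - 1)) * |x - y| := by
    refine le_trans (hq _ hbx _ hby) ?_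
    refine mul_le_mul_of_nonneg_left ?_ (by positivity)
    have hfac : x * (1 - x) - y * (1 - y) = (x - y) * (1 - (x + y)) := by ring
    rw [hfac, abs_mul]
    have h1 : |1 - (x + y)| ≤ 1 := by
      rw [abs_le]; constructor <;> nlinarith
    calc |x - y| * |1 - (x + y)| ≤ |x - y| * 1 :=
          mul_le_mul_of_nonneg_left h1 (abs_nonneg _)
    _ = |x - y| := mul_one _
  have hpy : |(y * (1 - y)) ^ (-β)| ≤ e ^ (-β) := by
    rw [abs_of_nonneg (Real.rpow_nonneg (by nlinarith) _)]
    exact Real.rpow_le_rpow_of_nonpos hepos hby (by linarith)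
  have hμx : |μ - x| ≤ 1 := by rw [abs_le]; constructor <;> nlinarith
  have hGsplit : G β θ μ x - G β θ μ y =
      θ * ((μ - x) * ((x * (1 - x)) ^ (-β) - (y * (1 - y)) ^ (-β))
        + (y - x) * (y * (1 - y)) ^ (-β)) := by
    unfold G; ring
  rw [hGsplit, abs_mul, abs_of_pos hθ]
  have hin : |(μ - x) * ((x * (1 - x)) ^ (-β) - (y * (1 - y)) ^ (-β))
      + (y - x) * (y * (1 - y)) ^ (-β)| ≤
      (β * e ^ (-β - 1) + e ^ (-β)) * |x - y| := by
    calc |(μ - x) * ((x * (1 - x)) ^ (-β) - (y * (1 - y)) ^ (-β))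
        + (y - x) * (y * (1 - y)) ^ (-β)|
        ≤ |(μ - x) * ((x * (1 - x)) ^ (-β) - (y * (1 - y)) ^ (-β))|
          + |(y - x) * (y * (1 - y)) ^ (-β)| := abs_add_le _ _
    _ = |μ - x| * |(x * (1 - x)) ^ (-β) - (y * (1 - y)) ^ (-β)|
          + |y - x| * |(y * (1 - y)) ^ (-β)| := by rw [abs_mul, abs_mul]
    _ ≤ 1 * ((β * e ^ (-β - 1)) * |x - y|) + |x - y| * e ^ (-β) := by
        refine add_le_add ?_ ?_
        · exact mul_le_mul hμx hpxy (abs_nonneg _) zero_le_one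
        · rw [abs_sub_comm y x]
          exact mul_le_mul_of_nonneg_left hpy (abs_nonneg _)
    _ = (β * e ^ (-β - 1) + e ^ (-β)) * |x - y| := by ring
  calc θ * |(μ - x) * ((x * (1 - x)) ^ (-β) - (y * (1 - y)) ^ (-β))
      + (y - x) * (y * (1 - y)) ^ (-β)|
      ≤ θ * ((β * e ^ (-β - 1) + e ^ (-β)) * |x - y|) :=
        mul_le_mul_of_nonneg_left hin hθ.le
  _ = (θ * (β * e ^ (-β - 1) + e ^ (-β))) * |x - y| := by ring

end Stmt12Aux

open Stmt12Aux in
theorem stmt12 (α β θ μ γ : ℝ) (hα : α ∈ Set.Ioc (0:ℝ) 1)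
    (hβ : β ∈ Set.Ioo (1 - α) 1) (hθ : 0 < θ) (hμ : μ ∈ Set.Ioo (0:ℝ) 1)
    (w : ℝ → ℝ) (hw0 : w 0 = 0)
    (hw : ∀ T > (0:ℝ), ∃ C : ℝ, ∀ s ∈ Set.Icc (0:ℝ) T, ∀ t ∈ Set.Icc (0:ℝ) T,
      |w t - w s| ≤ C * |t - s| ^ α)
    (y₀1 y₀2 : ℝ) (hy₀1 : y₀1 ∈ Set.Ioo 0 (F1 β 1)) (hy₀2 : y₀2 ∈ Set.Ioo 0 (F1 β 1))
    (hy₀ : y₀1 < y₀2)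
    (y1 y2 : ℝ → ℝ)
    (hy1c : ContinuousOn y1 (Set.Ici 0))
    (hy1m : ∀ t ∈ Set.Ici (0:ℝ), y1 t ∈ Set.Ioo 0 (F1 β 1))
    (hy1e : ∀ t ∈ Set.Ici (0:ℝ),
      y1 t = y₀1 + (∫ s in (0:ℝ)..t, G β θ μ (F1inv β (y1 s))) + γ * θ ^ β * w t)
    (hy2c : ContinuousOn y2 (Set.Ici 0))
    (hy2m : ∀ t ∈ Set.Ici (0:ℝ), y2 t ∈ Set.Ioo 0 (F1 β 1))
    (hy2e : ∀ t ∈ Set.Ici (0:ℝ),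
      y2 t = y₀2 + (∫ s in (0:ℝ)..t, G β θ μ (F1inv β (y2 s))) + γ * θ ^ β * w t) :
    ∀ t ∈ Set.Ici (0:ℝ), y1 t < y2 t := by
  have hβ0 : 0 < β := lt_of_le_of_lt (by linarith [hα.2]) hβ.1
  have hβ1 : β < 1 := hβ.2
  have hmax : ∀ s : ℝ, max s 0 ∈ Ici (0:ℝ) := fun s => le_max_right s 0
  have hlipinv : LipschitzOnWith 1 (F1inv β) (Icc 0 (F1 β 1)) := by
    rw [lipschitzOnWith_iff_dist_le_mul]
    intro a ha b hb
    rw [Real.dist_eq, Real.dist_eq]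
    push_cast
    rw [one_mul]
    exact F1inv_lip hβ0 hβ1 ha hb
  -- continuous extensions
  have hY1c : Continuous (fun s : ℝ => y1 (max s 0)) :=
    hy1c.comp_continuous (continuous_id.max continuous_const) hmax
  have hY2c : Continuous (fun s : ℝ => y2 (max s 0)) :=
    hy2c.comp_continuous (continuous_id.max continuous_const) hmax
  have hX1c : Continuous (fun s : ℝ => F1inv β (y1 (max s 0))) :=
    hlipinv.continuousOn.comp_continuous hY1c
      (fun s => Ioo_subset_Icc_self (hy1m _ (hmax s)))
  have hX2c : Continuous (fun s : ℝ => F1inv β (y2 (max s 0))) :=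
    hlipinv.continuousOn.comp_continuous hY2c
      (fun s => Ioo_subset_Icc_self (hy2m _ (hmax s)))
  have hX1m : ∀ s : ℝ, F1inv β (y1 (max s 0)) ∈ Ioo (0:ℝ) 1 :=
    fun s => F1inv_mem_Ioo hβ0 hβ1 (hy1m _ (hmax s))
  have hX2m : ∀ s : ℝ, F1inv β (y2 (max s 0)) ∈ Ioo (0:ℝ) 1 :=
    fun s => F1inv_mem_Ioo hβ0 hβ1 (hy2m _ (hmax s))
  set H1 : ℝ → ℝ := fun s => G β θ μ (F1inv β (y1 (max s 0))) with hH1def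
  set H2 : ℝ → ℝ := fun s => G β θ μ (F1inv β (y2 (max s 0))) with hH2def
  have hH1c : Continuous H1 := G_contOn.comp_continuous hX1c hX1m
  have hH2c : Continuous H2 := G_contOn.comp_continuous hX2c hX2m
  set Z : ℝ → ℝ := fun r => (y₀2 - y₀1) + ∫ s in (0:ℝ)..r, (H2 s - H1 s) with hZdef
  have hZd : ∀ r : ℝ, HasDerivAt Z (H2 r - H1 r) r := by
    intro r
    exact HasDerivAt.const_add _
      (intervalIntegral.integral_hasDerivAt_right
        ((hH2c.sub hH1c).intervalIntegrable _ _)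
        ((hH2c.sub hH1c).stronglyMeasurableAtFilter _ _)
        (hH2c.sub hH1c).continuousAt)
  have hZcont : Continuous Z := continuous_iff_continuousAt.2 fun r => (hZd r).continuousAt
  have hZ0 : Z 0 = y₀2 - y₀1 := by
    simp only [hZdef, intervalIntegral.integral_same, add_zero]
  have hZeq : ∀ r ∈ Ici (0:ℝ), Z r = y2 r - y1 r := by
    intro r hr
    have hEq1 : EqOn (fun s => G β θ μ (F1inv β (y1 s))) H1 (uIcc 0 r) := by
      intro s hs
      rw [uIcc_of_le hr] at hs
      simp only [hH1def, max_eq_left hs.1]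
    have hEq2 : EqOn (fun s => G β θ μ (F1inv β (y2 s))) H2 (uIcc 0 r) := by
      intro s hs
      rw [uIcc_of_le hr] at hs
      simp only [hH2def, max_eq_left hs.1]
    have hcong1 : (∫ s in (0:ℝ)..r, G β θ μ (F1inv β (y1 s))) = ∫ s in (0:ℝ)..r, H1 s :=
      intervalIntegral.integral_congr hEq1
    have hcong2 : (∫ s in (0:ℝ)..r, G β θ μ (F1inv β (y2 s))) = ∫ s in (0:ℝ)..r, H2 s :=
      intervalIntegral.integral_congr hEq2
    have hsub : (∫ s in (0:ℝ)..r, (H2 s - H1 s))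
        = (∫ s in (0:ℝ)..r, H2 s) - ∫ s in (0:ℝ)..r, H1 s :=
      intervalIntegral.integral_sub (hH2c.intervalIntegrable _ _) (hH1c.intervalIntegrable _ _)
    have e1 := hy1e r hr
    have e2 := hy2e r hr
    simp only [hZdef]
    rw [hsub, ← hcong1, ← hcong2]
    rw [e1, e2]
    ring
  have claim : ∀ r ∈ Ici (0:ℝ), Z r ≠ 0 := by
    intro T hT hZT
    rcases eq_or_lt_of_le (show (0:ℝ) ≤ T from hT) with hT0 | hT0
    · rw [← hT0, hZ0] at hZT; linarith
    -- compactness bounds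
    have hne : (Icc (0:ℝ) T).Nonempty := nonempty_Icc.2 hT
    obtain ⟨s1, hs1m, hs1⟩ := isCompact_Icc.exists_isMinOn hne hX1c.continuousOn
    obtain ⟨s2, hs2m, hs2⟩ := isCompact_Icc.exists_isMinOn hne hX2c.continuousOn
    obtain ⟨s3, hs3m, hs3⟩ := isCompact_Icc.exists_isMaxOn hne hX1c.continuousOn
    obtain ⟨s4, hs4m, hs4⟩ := isCompact_Icc.exists_isMaxOn hne hX2c.continuousOn
    set c : ℝ := min (F1inv β (y1 (max s1 0))) (F1inv β (y2 (max s2 0))) with hcdef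
    set d : ℝ := max (F1inv β (y1 (max s3 0))) (F1inv β (y2 (max s4 0))) with hddef
    have hc : 0 < c := lt_min (hX1m s1).1 (hX2m s2).1
    have hd : d < 1 := max_lt (hX1m s3).2 (hX2m s4).2
    have hmem1 : ∀ s ∈ Icc (0:ℝ) T, F1inv β (y1 (max s 0)) ∈ Icc c d := by
      intro s hs
      exact ⟨le_trans (min_le_left _ _) (hs1 hs),
        le_trans (hs3 hs) (le_max_left _ _)⟩
    have hmem2 : ∀ s ∈ Icc (0:ℝ) T, F1inv β (y2 (max s 0)) ∈ Icc c d := by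
      intro s hs
      exact ⟨le_trans (min_le_right _ _) (hs2 hs),
        le_trans (hs4 hs) (le_max_right _ _)⟩
    set L : ℝ := θ * (β * (c * (1 - d)) ^ (-β - 1) + (c * (1 - d)) ^ (-β)) with hLdef
    have hL0 : 0 ≤ L := by
      have h0T : (0:ℝ) ∈ Icc (0:ℝ) T := ⟨le_refl 0, hT⟩
      have hcd : c ≤ d := le_trans (hmem1 0 h0T).1 (hmem1 0 h0T).2
      have he : 0 < c * (1 - d) := by nlinarith
      have h1 : 0 ≤ (c * (1 - d)) ^ (-β - 1) := Real.rpow_nonneg he.le _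
      have h2 : 0 ≤ (c * (1 - d)) ^ (-β) := Real.rpow_nonneg he.le _
      positivity
    have hbound : ∀ s ∈ Icc (0:ℝ) T, |H2 s - H1 s| ≤ L * |Z s| := by
      intro s hs
      have hseq : max s 0 = s := max_eq_left hs.1
      have hstep1 : |H2 s - H1 s| ≤ L * |F1inv β (y2 (max s 0)) - F1inv β (y1 (max s 0))| :=
        G_lip hβ0 hθ hμ.1 hμ.2 hc hd (hmem2 s hs) (hmem1 s hs)
      have hstep2 : |F1inv β (y2 (max s 0)) - F1inv β (y1 (max s 0))| ≤ |y2 s - y1 s| := by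
        rw [hseq]
        exact F1inv_lip hβ0 hβ1 (Ioo_subset_Icc_self (hy2m s hs.1))
          (Ioo_subset_Icc_self (hy1m s hs.1))
      rw [hZeq s hs.1]
      exact le_trans hstep1 (mul_le_mul_of_nonneg_left hstep2 hL0)
    -- Gronwall on reversed time
    have hu : ∀ x ∈ Icc (0:ℝ) T, ‖Z (T - x)‖ ≤ gronwallBound 0 L 0 (x - 0) := by
      refine norm_le_gronwallBound_of_norm_deriv_right_le
        (f := fun s => Z (T - s)) (f' := fun s => -(H2 (T - s) - H1 (T - s))) ?_ ?_ ?_ ?_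
      · exact (hZcont.comp (continuous_const.sub continuous_id)).continuousOn
      · intro x hx
        have h := (hZd (T - x)).comp x ((hasDerivAt_id x).const_sub T)
        have h' : HasDerivAt (fun s => Z (T - s)) (-(H2 (T - x) - H1 (T - x))) x := by
          simpa [Function.comp_def, mul_neg_one] using h
        exact h'.hasDerivWithinAt
      · simp [hZT]
      · intro x hx
        rw [norm_neg, Real.norm_eq_abs, Real.norm_eq_abs, add_zero]
        exact hbound (T - x) ⟨by linarith [hx.2], by linarith [hx.1]⟩
    have hfin := hu T ⟨hT, le_refl T⟩
    rw [sub_self, gronwallBound_ε0_δ0, hZ0, Real.norm_eq_abs] at hfin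
    have : 0 < |y₀2 - y₀1| := abs_pos.2 (by linarith)
    linarith
  intro t ht
  by_contra hle
  push_neg at hle
  have hZt : Z t ≤ 0 := by rw [hZeq t ht]; linarith
  have h0mem : (0:ℝ) ∈ Icc (Z t) (Z 0) := ⟨hZt, by rw [hZ0]; linarith⟩
  obtain ⟨s, hsm, hZs⟩ := intermediate_value_Icc' ht hZcont.continuousOn h0mem
  exact claim s hsm.1 hZs
end
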